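/- Let X and Y be nonempty metric spaces and suppose Y is dotted connected, i.e., diam_u Y = 0 (in particular this holds when Y is path-connected). Then 2·d_GH(X, Y) ≥ diam_u X, where both sides are values in [0,∞]. In particular, if d_GH(X, Y) < ∞ for some dotted connected Y, then diam_u X < ∞, and if a sequence of path-connected metric spaces converges to X in the Gromov–Hausdorff distance, then diam_u X = 0. -/

import Mathlib

open scoped ENNReal

noncomputable section

/-- Ultrametric pseudodistance: infimum over chains from `x` to `y` of the
maximal edge length of the chain. -/
noncomputable def ultraDist {X : Type*} [MetricSpace X] (x y : X) : ℝ≥0∞ :=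
  ⨅ (n : ℕ) (f : Fin (n + 1) → X) (_ : f 0 = x) (_ : f (Fin.last n) = y),
    ⨆ i : Fin n, edist (f i.castSucc) (f i.succ)

/-- Ultrametric pseudodiameter. -/
noncomputable def ultraDiam (X : Type*) [MetricSpace X] : ℝ≥0∞ :=
  ⨆ (x : X) (y : X), ultraDist x y

/-- A correspondence between `X` and `Y`: a relation whose projections are surjective. -/
def IsCorrespondence {X Y : Type*} (R : Set (X × Y)) : Prop :=
  (∀ x : X, ∃ y : Y, (x, y) ∈ R) ∧ (∀ y : Y, ∃ x : X, (x, y) ∈ R)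

/-- Distortion of a relation. -/
noncomputable def distortion {X Y : Type*} [MetricSpace X] [MetricSpace Y]
    (R : Set (X × Y)) : ℝ≥0∞ :=
  ⨆ (p ∈ R) (q ∈ R), ENNReal.ofReal |dist p.1 q.1 - dist p.2 q.2|

/-- Gromov–Hausdorff distance: half the infimal distortion of correspondences. -/
noncomputable def ghDist (X Y : Type*) [MetricSpace X] [MetricSpace Y] : ℝ≥0∞ :=
  (⨅ (R : Set (X × Y)) (_ : IsCorrespondence R), distortion R) / 2


/-- if `Y` is dotted connected (zero ultrametric pseudodiameter),
then twice the Gromov–Hausdorff distance from `X` to `Y` bounds `diam_u X`. -/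
theorem ultraDiam_le_two_ghDist {X Y : Type*} [MetricSpace X] [MetricSpace Y]
    [Nonempty X] [Nonempty Y] (hY : ultraDiam Y = 0) :
    ultraDiam X ≤ 2 * ghDist X Y := by
  have key : ∀ R : Set (X × Y), IsCorrespondence R → ultraDiam X ≤ distortion R := by
    intro R hR
    refine iSup₂_le fun x x' => ?_
    obtain ⟨y, hy⟩ := hR.1 x
    obtain ⟨y', hy'⟩ := hR.1 x'
    have hedist : ∀ a b a' b', (a, b) ∈ R → (a', b') ∈ R →
        edist a a' ≤ edist b b' + distortion R := by
      intro a b a' b' h1 h2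
      have h3 : ENNReal.ofReal |dist a a' - dist b b'| ≤ distortion R :=
        le_iSup₂_of_le (a, b) h1 (le_iSup₂_of_le (a', b') h2 le_rfl)
      calc edist a a' = ENNReal.ofReal (dist a a') := edist_dist _ _
        _ ≤ ENNReal.ofReal (dist b b' + |dist a a' - dist b b'|) := by
            apply ENNReal.ofReal_le_ofReal
            linarith [le_abs_self (dist a a' - dist b b')]
        _ = ENNReal.ofReal (dist b b') + ENNReal.ofReal |dist a a' - dist b b'| :=
            ENNReal.ofReal_add dist_nonneg (abs_nonneg _)
        _ = edist b b' + ENNReal.ofReal |dist a a' - dist b b'| := by rw [edist_dist]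
        _ ≤ edist b b' + distortion R := add_le_add_right h3 _
    refine ENNReal.le_of_forall_pos_le_add fun ε hε _ => ?_
    have hyy' : ultraDist y y' = 0 := by
      refine le_antisymm ?_ (zero_le)
      rw [← hY]
      exact le_iSup₂ (f := fun a b : Y => ultraDist a b) y y'
    have hlt : ultraDist y y' < ε := by
      rw [hyy']; exact_mod_cast hε
    rw [ultraDist] at hlt
    simp only [iInf_lt_iff] at hlt
    obtain ⟨n, f, hf0, hfl, hsup⟩ := hlt
    choose l hl using fun i : Fin (n + 1) => hR.2 (f i)
    set l' : Fin (n + 1) → X := Function.update l 0 x with hl'def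
    have hl' : ∀ i : Fin (n + 1), (l' i, f i) ∈ R := by
      intro i
      by_cases hi : i = 0
      · subst hi
        simp only [hl'def, Function.update_self]
        rw [hf0]; exact hy
      · simp only [hl'def, Function.update_of_ne hi]
        exact hl i
    set g : Fin (n + 2) → X := Fin.snoc l' x' with hgdef
    have hg0 : g 0 = x := by
      have : (0 : Fin (n + 2)) = Fin.castSucc 0 := rfl
      rw [hgdef, this, Fin.snoc_castSucc]
      simp [hl'def]
    have hgl : g (Fin.last (n + 1)) = x' := by
      rw [hgdef, Fin.snoc_last]
    have hedge : ∀ i : Fin (n + 1),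
        edist (g i.castSucc) (g i.succ) ≤ distortion R + ε := by
      intro i
      have h1 : g i.castSucc = l' i := by rw [hgdef, Fin.snoc_castSucc]
      by_cases hi : (i : ℕ) < n
      · have h2 : g i.succ = l' ⟨(i : ℕ) + 1, Nat.succ_lt_succ hi⟩ := by
          have : i.succ = Fin.castSucc ⟨(i : ℕ) + 1, Nat.succ_lt_succ hi⟩ := by
            ext; simp
          rw [hgdef, this, Fin.snoc_castSucc]
        have hfle : edist (f i) (f ⟨(i : ℕ) + 1, Nat.succ_lt_succ hi⟩) ≤ ↑ε := by
          have hj : (⟨(i : ℕ), hi⟩ : Fin n).castSucc = i := by ext; simp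
          have hj' : (⟨(i : ℕ), hi⟩ : Fin n).succ =
              (⟨(i : ℕ) + 1, Nat.succ_lt_succ hi⟩ : Fin (n + 1)) := by ext; simp
          calc edist (f i) (f ⟨(i : ℕ) + 1, Nat.succ_lt_succ hi⟩)
              = edist (f (⟨(i : ℕ), hi⟩ : Fin n).castSucc)
                  (f (⟨(i : ℕ), hi⟩ : Fin n).succ) := by rw [hj, hj']
            _ ≤ ⨆ j : Fin n, edist (f j.castSucc) (f j.succ) := le_iSup (fun j : Fin n => edist (f j.castSucc) (f j.succ)) _
            _ ≤ ↑ε := hsup.le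
        rw [h1, h2]
        calc edist (l' i) (l' ⟨(i : ℕ) + 1, Nat.succ_lt_succ hi⟩)
            ≤ edist (f i) (f ⟨(i : ℕ) + 1, Nat.succ_lt_succ hi⟩) + distortion R :=
              hedist _ _ _ _ (hl' i) (hl' _)
          _ ≤ ↑ε + distortion R := add_le_add_left hfle _
          _ = distortion R + ↑ε := add_comm _ _
      · have hin : i = Fin.last n := by
          ext
          have := i.isLt
          simp only [Fin.val_last]
          omega
        have h2 : g i.succ = x' := by
          have : i.succ = Fin.last (n + 1) := by rw [hin]; rfl
          rw [hgdef, this, Fin.snoc_last]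
        rw [h1, h2]
        calc edist (l' i) x' ≤ edist (f i) y' + distortion R :=
              hedist _ _ _ _ (hl' i) hy'
          _ = 0 + distortion R := by rw [hin, hfl, edist_self]
          _ = distortion R := zero_add _
          _ ≤ distortion R + ↑ε := le_self_add
    calc ultraDist x x'
        ≤ ⨆ i : Fin (n + 1), edist (g i.castSucc) (g i.succ) := by
          rw [ultraDist]
          exact iInf_le_of_le (n + 1) (iInf_le_of_le g (iInf_le_of_le hg0 (iInf_le _ hgl)))
      _ ≤ distortion R + ↑ε := iSup_le hedge
  have h2 : 2 * ghDist X Y = ⨅ (R : Set (X × Y)) (_ : IsCorrespondence R), distortion R := by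
    rw [ghDist, ENNReal.mul_div_cancel' (by norm_num) (by norm_num)]
  rw [h2]
  exact le_iInf₂ key

end
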